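/- arXiv:1205.1490 — 3 statements merged into one kernel-verified Lean document; each statement's English description precedes it below -/
import Mathlib

section
/- For every positive integer d, the number of subgroups of ℤ × ℤ of index d equals σ(d). -/
open AddSubgroup

def fmap (a b c : ℕ) : ℤ × ℤ →+ ZMod c × ZMod (a * c) :=
  AddMonoidHom.mk' (fun p => ((p.2 : ZMod c), ((c * p.1 - b * p.2 : ℤ) : ZMod (a * c))))
    (by
      intro p q
      simp only [Prod.fst_add, Prod.snd_add, Prod.mk_add_mk, Prod.mk.injEq]
      constructor
      · push_cast; ring
      · push_cast; ring)

def Lsub (a b c : ℕ) : AddSubgroup (ℤ × ℤ) := (fmap a b c).ker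

theorem mem_Lsub {a b c : ℕ} {p : ℤ × ℤ} :
    p ∈ Lsub a b c ↔ (c : ℤ) ∣ p.2 ∧ ((a * c : ℕ) : ℤ) ∣ c * p.1 - b * p.2 := by
  rw [Lsub, AddMonoidHom.mem_ker, fmap, AddMonoidHom.mk'_apply, Prod.mk_eq_zero,
    ZMod.intCast_zmod_eq_zero_iff_dvd, ZMod.intCast_zmod_eq_zero_iff_dvd]

def gmap (a b c : ℕ) : ZMod c × ZMod (a * c) →+ ZMod c :=
  AddMonoidHom.mk' (fun q => b * q.1 + ZMod.castHom (dvd_mul_left c a) (ZMod c) q.2)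
    (by intro p q; simp only [Prod.fst_add, Prod.snd_add, map_add]; ring)

theorem range_fmap (a b c : ℕ) (ha : 0 < a) (hc : 0 < c) :
    (fmap a b c).range = (gmap a b c).ker := by
  have hac : 0 < a * c := Nat.mul_pos ha hc
  haveI : NeZero c := ⟨hc.ne'⟩
  haveI : NeZero (a * c) := ⟨hac.ne'⟩
  ext q
  constructor
  · rintro ⟨p, rfl⟩
    simp only [AddMonoidHom.mem_ker, gmap, fmap, AddMonoidHom.mk'_apply]
    rw [map_intCast]
    push_cast
    ring_nf
    simp [ZMod.natCast_self]
  · intro hq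
    obtain ⟨u, v⟩ := q
    simp only [AddMonoidHom.mem_ker, gmap, AddMonoidHom.mk'_apply, ZMod.castHom_apply] at hq
    have hv : (v.val : ZMod c) = -((b : ZMod c) * u) := by
      rw [ZMod.natCast_val]
      linear_combination hq
    have hdvd : (c : ℤ) ∣ (v.val : ℤ) + b * u.val := by
      rw [← ZMod.intCast_zmod_eq_zero_iff_dvd]
      push_cast
      rw [hv]
      simp [ZMod.natCast_val, ZMod.cast_id]
    obtain ⟨t, ht⟩ := hdvd
    refine ⟨(t, (u.val : ℤ)), ?_⟩
    simp only [fmap, AddMonoidHom.mk'_apply, Prod.mk.injEq]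
    constructor
    · simp [ZMod.natCast_val, ZMod.cast_id]
    · have : (c : ℤ) * t - b * u.val = v.val := by linarith [ht]
      rw [this]
      simp [ZMod.natCast_val, ZMod.cast_id]

theorem gmap_surjective (a b c : ℕ) (ha : 0 < a) (hc : 0 < c) :
    Function.Surjective (gmap a b c) := by
  intro w
  haveI : NeZero c := ⟨hc.ne'⟩
  refine ⟨(0, ((w.val : ℤ) : ZMod (a * c))), ?_⟩
  simp only [gmap, AddMonoidHom.mk'_apply, mul_zero, zero_add, map_intCast]
  push_cast
  simp [ZMod.natCast_val, ZMod.cast_id]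

theorem index_Lsub (a b c : ℕ) (ha : 0 < a) (hc : 0 < c) :
    (Lsub a b c).index = a * c := by
  have hac : 0 < a * c := Nat.mul_pos ha hc
  rw [Lsub, AddSubgroup.index_ker, range_fmap a b c ha hc]
  -- Nat.card of ker of surjective gmap
  have h1 : (gmap a b c).ker.index = c := by
    rw [AddSubgroup.index_ker, AddMonoidHom.range_eq_top_of_surjective _ (gmap_surjective a b c ha hc)]
    rw [Nat.card_congr AddSubgroup.topEquiv.toEquiv, Nat.card_zmod]
  have h2 := AddSubgroup.card_mul_index (gmap a b c).ker
  rw [h1] at h2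
  have h3 : Nat.card (ZMod c × ZMod (a * c)) = c * (a * c) := by
    rw [Nat.card_prod, Nat.card_zmod, Nat.card_zmod]
  rw [h3] at h2
  have h4 : Nat.card (gmap a b c).ker * c = (a * c) * c := by
    rw [h2]; ring
  exact Nat.eq_of_mul_eq_mul_right hc h4

theorem fst_mem_Lsub {a b c : ℕ} (hc : 0 < c) {x : ℤ} :
    ((x, 0) : ℤ × ℤ) ∈ Lsub a b c ↔ (a : ℤ) ∣ x := by
  rw [mem_Lsub]
  simp only [mul_zero, sub_zero, dvd_zero, true_and]
  push_cast
  rw [mul_comm (a : ℤ) c]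
  constructor
  · rintro ⟨k, hk⟩
    refine ⟨k, mul_left_cancel₀ (show (c:ℤ) ≠ 0 from Int.natCast_ne_zero.2 hc.ne') ?_⟩
    rw [hk]; ring
  · rintro ⟨k, hk⟩
    exact ⟨k, by rw [hk]; ring⟩

theorem diag_mem_Lsub {a b c : ℕ} :
    (((b : ℤ), (c : ℤ)) : ℤ × ℤ) ∈ Lsub a b c := by
  rw [mem_Lsub]
  exact ⟨dvd_refl _, by simp [mul_comm]⟩

theorem Lsub_injective {d : ℕ} (hd : 0 < d) :
    ∀ p q : {p : ℕ × ℕ × ℕ // p.1 * p.2.2 = d ∧ p.2.1 < p.1},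
      Lsub p.1.1 p.1.2.1 p.1.2.2 = Lsub q.1.1 q.1.2.1 q.1.2.2 → p = q := by
  rintro ⟨⟨a₁, b₁, c₁⟩, hp1, hp2⟩ ⟨⟨a₂, b₂, c₂⟩, hq1, hq2⟩ h
  dsimp only at hp1 hp2 hq1 hq2 h
  have ha₁ : 0 < a₁ := lt_of_le_of_lt (Nat.zero_le _) hp2
  have ha₂ : 0 < a₂ := lt_of_le_of_lt (Nat.zero_le _) hq2
  have hc₁ : 0 < c₁ := by
    rcases Nat.eq_zero_or_pos c₁ with h0 | h0
    · exfalso; rw [h0, mul_zero] at hp1; omega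
    · exact h0
  have hc₂ : 0 < c₂ := by
    rcases Nat.eq_zero_or_pos c₂ with h0 | h0
    · exfalso; rw [h0, mul_zero] at hq1; omega
    · exact h0
  -- a₁ = a₂
  have hA : a₁ = a₂ := by
    apply Nat.dvd_antisymm
    · have := (fst_mem_Lsub (a := a₂) (b := b₂) hc₂ (x := (a₂ : ℤ))).2 dvd_rfl
      rw [← h, fst_mem_Lsub hc₁] at this
      exact_mod_cast this
    · have := (fst_mem_Lsub (a := a₁) (b := b₁) hc₁ (x := (a₁ : ℤ))).2 dvd_rfl
      rw [h, fst_mem_Lsub hc₂] at this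
      exact_mod_cast this
  -- c₁ = c₂
  have hC : c₁ = c₂ := by
    apply Nat.dvd_antisymm
    · have := diag_mem_Lsub (a := a₂) (b := b₂) (c := c₂)
      rw [← h, mem_Lsub] at this
      have := this.1
      simp only at this
      exact_mod_cast this
    · have := diag_mem_Lsub (a := a₁) (b := b₁) (c := c₁)
      rw [h, mem_Lsub] at this
      have := this.1
      simp only at this
      exact_mod_cast this
  -- b₁ = b₂
  have hB : b₁ = b₂ := by
    have := diag_mem_Lsub (a := a₁) (b := b₁) (c := c₁)
    rw [h, ← hA, ← hC, mem_Lsub] at this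
    obtain ⟨-, h2⟩ := this
    simp only at h2
    have h3 : ((a₁ : ℤ)) ∣ (b₁ : ℤ) - b₂ := by
      obtain ⟨k, hk⟩ := h2
      refine ⟨k, ?_⟩
      have hc' : (c₁ : ℤ) ≠ 0 := Int.natCast_ne_zero.2 hc₁.ne'
      apply mul_left_cancel₀ hc'
      push_cast at hk ⊢
      ring_nf
      ring_nf at hk
      linarith [hk]
    have h4 : (b₁ : ℤ) - b₂ = 0 := by
      apply Int.eq_zero_of_abs_lt_dvd h3
      rw [abs_lt]
      constructor
      · have : (b₂ : ℤ) < a₁ := by exact_mod_cast hA ▸ hq2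
        omega
      · have : (b₁ : ℤ) < a₁ := by exact_mod_cast hp2
        omega
    have : (b₁ : ℤ) = b₂ := by linarith
    exact_mod_cast this
  simp [hA, hB, hC]

theorem Lsub_surjective {d : ℕ} (hd : 0 < d) (L : AddSubgroup (ℤ × ℤ)) (hL : L.index = d) :
    ∃ a b c : ℕ, a * c = d ∧ b < a ∧ L = Lsub a b c := by
  obtain ⟨γ, hγ⟩ := Int.subgroup_cyclic (L.map (AddMonoidHom.snd ℤ ℤ))
  obtain ⟨α, hα⟩ := Int.subgroup_cyclic (L.comap (AddMonoidHom.inl ℤ ℤ))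
  set c : ℕ := γ.natAbs with hc_def
  set a : ℕ := α.natAbs with ha_def
  -- membership characterizations
  have hP : ∀ y : ℤ, (∃ x : ℤ, (x, y) ∈ L) ↔ γ ∣ y := by
    intro y
    constructor
    · rintro ⟨x, hx⟩
      have : y ∈ L.map (AddMonoidHom.snd ℤ ℤ) := ⟨(x, y), hx, rfl⟩
      rw [hγ, AddSubgroup.mem_closure_singleton] at this
      obtain ⟨n, hn⟩ := this
      exact ⟨n, by rw [← hn]; simp [smul_eq_mul]; ring⟩
    · rintro ⟨n, rfl⟩
      have : γ * n ∈ L.map (AddMonoidHom.snd ℤ ℤ) := by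
        rw [hγ, AddSubgroup.mem_closure_singleton]
        exact ⟨n, by simp [smul_eq_mul]; ring⟩
      obtain ⟨⟨x, y⟩, hxy, hy⟩ := this
      exact ⟨x, by simpa [← hy] using hxy⟩
  have hK : ∀ x : ℤ, (x, (0:ℤ)) ∈ L ↔ α ∣ x := by
    intro x
    constructor
    · intro hx
      have : x ∈ L.comap (AddMonoidHom.inl ℤ ℤ) := hx
      rw [hα, AddSubgroup.mem_closure_singleton] at this
      obtain ⟨n, hn⟩ := this
      exact ⟨n, by rw [← hn]; simp [smul_eq_mul]; ring⟩
    · rintro ⟨n, rfl⟩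
      have : α * n ∈ L.comap (AddMonoidHom.inl ℤ ℤ) := by
        rw [hα, AddSubgroup.mem_closure_singleton]
        exact ⟨n, by simp [smul_eq_mul]; ring⟩
      exact this
  -- positivity of c
  have hc : 0 < c := by
    rcases Nat.eq_zero_or_pos c with h0 | h0
    · exfalso
      have hγ0 : γ = 0 := Int.natAbs_eq_zero.1 h0
      have hle : L ≤ (AddMonoidHom.snd ℤ ℤ).ker := by
        rintro ⟨x, y⟩ hxy
        have : γ ∣ y := (hP y).1 ⟨x, hxy⟩
        rw [hγ0] at this
        simp only [AddMonoidHom.mem_ker]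
        simpa using this
      have h1 : ((AddMonoidHom.snd ℤ ℤ).ker.index : ℕ) ∣ L.index :=
        AddSubgroup.index_dvd_of_le hle
      have h2 : (AddMonoidHom.snd ℤ ℤ).ker.index = 0 := by
        rw [AddSubgroup.index_ker, AddMonoidHom.range_eq_top_of_surjective _
          (fun y => ⟨(0, y), rfl⟩)]
        rw [Nat.card_congr AddSubgroup.topEquiv.toEquiv]
        exact Nat.card_eq_zero_of_infinite
      rw [h2, hL] at h1
      omega
    · exact h0
  -- positivity of a
  have ha : 0 < a := by
    rcases Nat.eq_zero_or_pos a with h0 | h0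
    · exfalso
      have hα0 : α = 0 := Int.natAbs_eq_zero.1 h0
      have hinj : Function.Injective
          (fun n : ℤ => (QuotientAddGroup.mk (n, 0) : (ℤ × ℤ) ⧸ L)) := by
        intro n m hnm
        rw [QuotientAddGroup.eq_iff_sub_mem] at hnm
        have : n - m = 0 := by
          have h := (hK (n - m)).1 (by simpa using hnm)
          rw [hα0] at h
          simpa using h
        linarith
      have : Infinite ((ℤ × ℤ) ⧸ L) := Infinite.of_injective _ hinj
      have : L.index = 0 := by
        rw [AddSubgroup.index_eq_card]
        exact Nat.card_eq_zero_of_infinite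
      omega
    · exact h0
  -- pick b₀ with (b₀, c) ∈ L
  obtain ⟨b₀, hb₀⟩ := (hP (c : ℤ)).2 (Int.dvd_natAbs.2 dvd_rfl)
  set b : ℕ := (b₀ % (a : ℤ)).toNat with hb_def
  have ha' : (0:ℤ) < (a:ℤ) := by exact_mod_cast ha
  have hbZ : (b : ℤ) = b₀ % (a : ℤ) := Int.toNat_of_nonneg (Int.emod_nonneg _ ha'.ne')
  have hb_lt : b < a := by
    have := Int.emod_lt_of_pos b₀ ha'
    omega
  -- (a, 0) ∈ L
  have haL : ((a : ℤ), (0:ℤ)) ∈ L := (hK _).2 (Int.dvd_natAbs.2 dvd_rfl)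
  -- (b, c) ∈ L
  have hbcL : (((b:ℤ), (c:ℤ)) : ℤ × ℤ) ∈ L := by
    have hdvd : α ∣ b₀ - b := by
      have : (a : ℤ) ∣ b₀ - b := by
        rw [hbZ, Int.emod_def]
        exact ⟨b₀ / a, by ring⟩
      exact (Int.natAbs_dvd).1 this
    have h1 : ((b₀ - b : ℤ), (0:ℤ)) ∈ L := (hK _).2 hdvd
    have : (((b:ℤ), (c:ℤ)) : ℤ × ℤ) = (b₀, (c:ℤ)) - ((b₀ - b : ℤ), (0:ℤ)) := by
      ext <;> simp <;> ring
    rw [this]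
    exact sub_mem hb₀ h1
  have hcZ : ((c:ℤ)) ≠ 0 := by exact_mod_cast hc.ne'
  -- main ext
  have hLeq : L = Lsub a b c := by
    ext ⟨x, y⟩
    rw [mem_Lsub]
    constructor
    · intro hxy
      have hcy : (c : ℤ) ∣ y := Int.natAbs_dvd.2 ((hP y).1 ⟨x, hxy⟩)
      obtain ⟨y', rfl⟩ := hcy
      refine ⟨⟨y', rfl⟩, ?_⟩
      have h1 : ((x - b * y' : ℤ), (0:ℤ)) ∈ L := by
        have : ((x - b * y' : ℤ), (0:ℤ)) = (x, (c:ℤ) * y') - y' • ((b:ℤ), (c:ℤ)) := by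
          ext <;> simp [smul_eq_mul] <;> ring
        rw [this]
        exact sub_mem hxy (zsmul_mem hbcL y')
      have h2 : (a : ℤ) ∣ x - b * y' := Int.natAbs_dvd.2 ((hK _).1 h1)
      obtain ⟨k, hk⟩ := h2
      refine ⟨k, ?_⟩
      push_cast
      rw [show (c:ℤ) * x - b * ((c:ℤ) * y') = (c:ℤ) * (x - b * y') by ring, hk]
      ring
    · rintro ⟨⟨y', rfl⟩, h2⟩
      have h3 : (a : ℤ) ∣ x - b * y' := by
        obtain ⟨k, hk⟩ := h2
        refine ⟨k, ?_⟩
        apply mul_left_cancel₀ hcZ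
        push_cast at hk
        ring_nf at hk ⊢
        linarith [hk]
      have h4 : ((x - b * y' : ℤ), (0:ℤ)) ∈ L := (hK _).2 (Int.natAbs_dvd.1 h3)
      have : ((x, (c:ℤ) * y') : ℤ × ℤ) = y' • ((b:ℤ), (c:ℤ)) + ((x - b * y' : ℤ), (0:ℤ)) := by
        ext <;> simp [smul_eq_mul] <;> ring
      rw [this]
      exact add_mem (zsmul_mem hbcL y') h4
  refine ⟨a, b, c, ?_, hb_lt, hLeq⟩
  rw [← hL, hLeq, index_Lsub a b c ha hc]

theorem card_S (d : ℕ) (hd : 0 < d) :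
    Nat.card {p : ℕ × ℕ × ℕ // p.1 * p.2.2 = d ∧ p.2.1 < p.1} = ∑ k ∈ d.divisors, k := by
  have e : {p : ℕ × ℕ × ℕ // p.1 * p.2.2 = d ∧ p.2.1 < p.1} ≃ Σ k : d.divisors, Fin k :=
    { toFun := fun p => ⟨⟨p.1.1, Nat.mem_divisors.2 ⟨⟨p.1.2.2, p.2.1.symm⟩, hd.ne'⟩⟩,
        ⟨p.1.2.1, p.2.2⟩⟩
      invFun := fun s => ⟨(s.1.1, s.2.1, d / s.1.1), by
        obtain ⟨⟨k, hk⟩, ⟨i, hi⟩⟩ := s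
        have hk' := (Nat.mem_divisors.1 hk).1
        exact ⟨Nat.mul_div_cancel' hk', hi⟩⟩
      left_inv := by
        rintro ⟨⟨a, b, c⟩, h1, h2⟩
        have ha : 0 < a := by omega
        have : d / a = c := by
          rw [← h1]; exact Nat.mul_div_cancel_left c ha
        simp [this]
      right_inv := by
        rintro ⟨⟨k, hk⟩, ⟨i, hi⟩⟩
        rfl }
  rw [Nat.card_congr e, Nat.card_eq_fintype_card, Fintype.card_sigma]
  simp only [Fintype.card_fin]
  rw [← Finset.sum_coe_sort d.divisors (fun k => k)]

/-- For every positive integer `d`, the number of subgroups of `ℤ × ℤ` of index `d`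
equals `σ(d)`. -/
theorem stmt2 (d : ℕ) (hd : 0 < d) :
    Nat.card {L : AddSubgroup (ℤ × ℤ) // L.index = d} = ∑ k ∈ d.divisors, k := by
  have key : ∀ p : {p : ℕ × ℕ × ℕ // p.1 * p.2.2 = d ∧ p.2.1 < p.1},
      (Lsub p.1.1 p.1.2.1 p.1.2.2).index = d := by
    rintro ⟨⟨a, b, c⟩, h1, h2⟩
    have ha : 0 < a := by omega
    have hc : 0 < c := by
      rcases Nat.eq_zero_or_pos c with h0 | h0
      · exfalso; rw [h0, mul_zero] at h1; omega
      · exact h0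
    rw [index_Lsub a b c ha hc]
    exact h1
  let Φ : {p : ℕ × ℕ × ℕ // p.1 * p.2.2 = d ∧ p.2.1 < p.1} →
      {L : AddSubgroup (ℤ × ℤ) // L.index = d} :=
    fun p => ⟨Lsub p.1.1 p.1.2.1 p.1.2.2, key p⟩
  have hbij : Function.Bijective Φ := by
    constructor
    · intro p q hpq
      exact Lsub_injective hd p q (congrArg Subtype.val hpq)
    · rintro ⟨L, hL⟩
      obtain ⟨a, b, c, h1, h2, h3⟩ := Lsub_surjective hd L hL
      exact ⟨⟨(a, b, c), h1, h2⟩, by simp [Φ, ← h3]⟩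
  rw [← Nat.card_congr (Equiv.ofBijective Φ hbij), card_S d hd]
end

section
/- Let m and d be positive integers. The number of subgroups of ℤ × ℤ of index d that are contained in ℤ × mℤ equals σ(d/m), where σ(d/m) is defined to be 0 if m does not divide d. -/
open AddSubgroup

namespace Stmt4Aux

def L2 (a : ℕ) (b : ℤ) (c : ℕ) : AddSubgroup (ℤ × ℤ) :=
  AddSubgroup.closure {((a : ℤ), b), (0, (c : ℤ))}

lemma mem_L2 {a : ℕ} {b : ℤ} {c : ℕ} {p : ℤ × ℤ} :
    p ∈ L2 a b c ↔ ∃ s t : ℤ, p = (s * a, s * b + t * c) := by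
  unfold L2
  rw [show ({((a:ℤ),b),(0,(c:ℤ))} : Set (ℤ×ℤ)) = {((a:ℤ),b)} ∪ {(0,(c:ℤ))} by rfl,
    AddSubgroup.closure_union, ← zmultiples_eq_closure, ← zmultiples_eq_closure, mem_sup]
  constructor
  · rintro ⟨u, ⟨s, rfl⟩, v, ⟨t, rfl⟩, rfl⟩
    refine ⟨s, t, ?_⟩
    simp [Prod.ext_iff, mul_comm]
  · rintro ⟨s, t, rfl⟩
    refine ⟨s • ((a:ℤ),b), ⟨s, rfl⟩, t • (0,(c:ℤ)), ⟨t, rfl⟩, ?_⟩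
    simp [Prod.ext_iff, mul_comm]

/-- first-coordinate-mod-a hom -/
def ga (a : ℕ) : ℤ × ℤ →+ ZMod a :=
  AddMonoidHom.mk' (fun p => (p.1 : ZMod a)) (by intro p q; simp [Prod.fst_add])

/-- (p.2 - b p.1) mod c hom -/
def g2 (b : ℤ) (c : ℕ) : ℤ × ℤ →+ ZMod c :=
  AddMonoidHom.mk' (fun p => ((p.2 - b * p.1 : ℤ) : ZMod c)) (by intro p q; simp [Prod.fst_add, Prod.snd_add]; push_cast; ring)

def rho (a : ℕ) : ℤ × ℤ →+ ℤ × ℤ :=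
  AddMonoidHom.mk' (fun p => ((a : ℤ) * p.1, p.2)) (by intro p q; simp [Prod.ext_iff]; ring)

lemma ker_g2 (b : ℤ) (c : ℕ) : (g2 b c).ker = L2 1 b c := by
  ext p
  rw [AddMonoidHom.mem_ker, mem_L2]
  show ((p.2 - b * p.1 : ℤ) : ZMod c) = 0 ↔ _
  rw [ZMod.intCast_zmod_eq_zero_iff_dvd]
  constructor
  · rintro ⟨t, ht⟩
    exact ⟨p.1, t, by rw [Prod.ext_iff]; constructor <;> simp <;> linarith⟩
  · rintro ⟨s, t, rfl⟩
    exact ⟨t, by simp; ring⟩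

lemma index_ker_eq (c : ℕ) (hc : c ≠ 0) (f : ℤ × ℤ →+ ZMod c)
    (hf : Function.Surjective f) : f.ker.index = c := by
  haveI : NeZero c := ⟨hc⟩
  have h := AddSubgroup.index_ker f
  rw [AddMonoidHom.range_eq_top_of_surjective f hf] at h
  rw [h, Nat.card_congr AddSubgroup.topEquiv.toEquiv, Nat.card_zmod]

lemma g2_surj (b : ℤ) (c : ℕ) : Function.Surjective (g2 b c) := fun x => by
  obtain ⟨y, rfl⟩ := ZMod.intCast_surjective x
  exact ⟨(0, y), by show ((y - b * 0 : ℤ) : ZMod c) = _; norm_num⟩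

lemma ga_surj (a : ℕ) : Function.Surjective (ga a) := fun x => by
  obtain ⟨y, rfl⟩ := ZMod.intCast_surjective x
  exact ⟨(y, 0), rfl⟩

lemma index_L2_one (b : ℤ) (c : ℕ) (hc : c ≠ 0) : (L2 1 b c).index = c := by
  rw [← ker_g2]; exact index_ker_eq c hc _ (g2_surj b c)

lemma range_rho (a : ℕ) : (rho a).range = (ga a).ker := by
  ext p
  simp only [AddMonoidHom.mem_range, AddMonoidHom.mem_ker]
  show _ ↔ ((p.1 : ZMod a) = 0)
  rw [ZMod.intCast_zmod_eq_zero_iff_dvd]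
  constructor
  · rintro ⟨q, rfl⟩; exact ⟨q.1, rfl⟩
  · rintro ⟨s, hs⟩; exact ⟨(s, p.2), by simp [rho, Prod.ext_iff]; omega⟩

lemma comap_rho_L2 (a : ℕ) (ha : a ≠ 0) (b : ℤ) (c : ℕ) :
    (L2 a b c).comap (rho a) = L2 1 b c := by
  ext p
  rw [mem_comap, mem_L2, mem_L2]
  show (∃ s t : ℤ, ((a:ℤ) * p.1, p.2) = (s * a, s * b + t * c)) ↔ _
  constructor
  · rintro ⟨s, t, hst⟩
    simp only [Prod.mk.injEq] at hst
    obtain ⟨h1, h2⟩ := hst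
    have ha' : (a : ℤ) ≠ 0 := Int.natCast_ne_zero.2 ha
    have hs : p.1 = s := by
      apply mul_left_cancel₀ ha'
      rw [h1]; ring
    refine ⟨p.1, t, ?_⟩
    rw [Prod.ext_iff]
    subst hs
    constructor
    · simp
    · simpa using h2
  · rintro ⟨s, t, hst⟩
    refine ⟨s, t, ?_⟩
    rw [Prod.ext_iff] at hst ⊢
    obtain ⟨h1, h2⟩ := hst
    constructor
    · simp at h1 ⊢; rw [h1]; ring
    · simpa using h2

lemma L2_le_ker_ga (a : ℕ) (b : ℤ) (c : ℕ) : L2 a b c ≤ (ga a).ker := by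
  intro p hp
  rw [mem_L2] at hp
  obtain ⟨s, t, rfl⟩ := hp
  show ((s * (a:ℤ) : ℤ) : ZMod a) = 0
  push_cast
  simp

lemma index_L2 (a : ℕ) (ha : a ≠ 0) (b : ℤ) (c : ℕ) (hc : c ≠ 0) :
    (L2 a b c).index = c * a := by
  have h1 := relIndex_mul_index (L2_le_ker_ga a b c)
  have h2 := AddSubgroup.index_comap (L2 a b c) (rho a)
  rw [range_rho, comap_rho_L2 a ha b c, index_L2_one b c hc] at h2
  rw [← h1, ← h2, index_ker_eq a ha _ (ga_surj a)]


lemma vert_mem {a : ℕ} (ha : a ≠ 0) {b : ℤ} {c : ℕ} {x : ℤ} :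
    ((0 : ℤ), x) ∈ L2 a b c ↔ (c : ℤ) ∣ x := by
  rw [mem_L2]
  constructor
  · rintro ⟨s, t, hst⟩
    simp only [Prod.mk.injEq] at hst
    obtain ⟨h1, h2⟩ := hst
    have ha' : (a : ℤ) ≠ 0 := Int.natCast_ne_zero.2 ha
    have hs : s = 0 := by
      rcases mul_eq_zero.1 h1.symm with h | h
      · exact h
      · exact absurd h ha'
    subst hs
    exact ⟨t, by linarith⟩
  · rintro ⟨t, rfl⟩
    exact ⟨0, t, by simp [mul_comm]⟩

lemma horiz_mem {a : ℕ} (ha : a ≠ 0) {b : ℤ} {c : ℕ} {x : ℤ} :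
    (((a : ℤ)), x) ∈ L2 a b c ↔ (c : ℤ) ∣ x - b := by
  rw [mem_L2]
  constructor
  · rintro ⟨s, t, hst⟩
    simp only [Prod.mk.injEq] at hst
    obtain ⟨h1, h2⟩ := hst
    have ha' : (a : ℤ) ≠ 0 := Int.natCast_ne_zero.2 ha
    have hs : s = 1 := by
      have : (1 : ℤ) * a = s * a := by linarith
      exact (mul_right_cancel₀ ha' this).symm
    subst hs
    exact ⟨t, by linarith⟩
  · rintro ⟨t, ht⟩
    exact ⟨1, t, by simp only [Prod.mk.injEq]; constructor <;> [ring; linarith]⟩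

lemma L2_inj {n : ℕ} (hn : n ≠ 0) {c c' b b' : ℕ} (hc : c ∣ n) (hc' : c' ∣ n)
    (hb : b < c) (hb' : b' < c') (h : L2 (n / c) b c = L2 (n / c') b' c') :
    c = c' ∧ b = b' := by
  have hc0 : c ≠ 0 := fun h0 => hn (by simpa [h0] using hc)
  have hc'0 : c' ≠ 0 := fun h0 => hn (by simpa [h0] using hc')
  have ha : n / c ≠ 0 := (Nat.div_ne_zero_iff_of_dvd hc).2 ⟨hn, hc0⟩
  have ha' : n / c' ≠ 0 := (Nat.div_ne_zero_iff_of_dvd hc').2 ⟨hn, hc'0⟩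
  have hcc' : c = c' := by
    have h1 : ((c' : ℤ)) ∣ (c : ℤ) := by
      have : ((0 : ℤ), (c : ℤ)) ∈ L2 (n / c') b' c' := by
        rw [← h]; exact (vert_mem ha).2 dvd_rfl
      exact (vert_mem ha').1 this
    have h2 : ((c : ℤ)) ∣ (c' : ℤ) := by
      have : ((0 : ℤ), (c' : ℤ)) ∈ L2 (n / c) b c := by
        rw [h]; exact (vert_mem ha').2 dvd_rfl
      exact (vert_mem ha).1 this
    exact Nat.dvd_antisymm (Int.natCast_dvd_natCast.1 h2) (Int.natCast_dvd_natCast.1 h1)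
  subst hcc'
  refine ⟨rfl, ?_⟩
  have hbb : ((c : ℤ)) ∣ (b : ℤ) - (b' : ℤ) := by
    have : (((n / c : ℕ) : ℤ), (b : ℤ)) ∈ L2 (n / c) b' c := by
      rw [← h]; exact (horiz_mem ha).2 (by simp)
    exact (horiz_mem ha).1 this
  have := Int.eq_zero_of_dvd_of_natAbs_lt_natAbs hbb (by omega)
  omega


lemma exists_rep {n : ℕ} (hn : n ≠ 0) (K : AddSubgroup (ℤ × ℤ)) (hK : K.index = n) :
    ∃ c b : ℕ, c ∣ n ∧ b < c ∧ K = L2 (n / c) (b : ℤ) c := by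
  obtain ⟨a0, hA⟩ := Int.subgroup_cyclic (K.map (AddMonoidHom.fst ℤ ℤ))
  obtain ⟨c0, hC⟩ := Int.subgroup_cyclic (K.comap (AddMonoidHom.inr ℤ ℤ))
  rw [← zmultiples_eq_closure] at hA hC
  have hmemA : ∀ x : ℤ, x ∈ K.map (AddMonoidHom.fst ℤ ℤ) ↔ a0 ∣ x := by
    intro x
    rw [hA, mem_zmultiples_iff]
    constructor
    · rintro ⟨k, rfl⟩; exact ⟨k, by simp [mul_comm]⟩
    · rintro ⟨k, rfl⟩; exact ⟨k, by simp [mul_comm]⟩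
  have hmemC : ∀ x : ℤ, ((0 : ℤ), x) ∈ K ↔ c0 ∣ x := by
    intro x
    have hx : ((0:ℤ), x) ∈ K ↔ x ∈ K.comap (AddMonoidHom.inr ℤ ℤ) := by
      simp [mem_comap]
    rw [hx, hC, mem_zmultiples_iff]
    constructor
    · rintro ⟨k, rfl⟩; exact ⟨k, by simp [mul_comm]⟩
    · rintro ⟨k, rfl⟩; exact ⟨k, by simp [mul_comm]⟩
  have h0n : ((0:ℤ), (n:ℤ)) ∈ K := by
    have := K.nsmul_index_mem ((0:ℤ), (1:ℤ))
    rw [hK] at this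
    simpa using this
  have hn0 : ((n:ℤ), (0:ℤ)) ∈ K := by
    have := K.nsmul_index_mem ((1:ℤ), (0:ℤ))
    rw [hK] at this
    simpa using this
  have hc0 : c0 ≠ 0 := by
    intro h0
    have := (hmemC n).1 h0n
    rw [h0] at this
    exact hn (by exact_mod_cast zero_dvd_iff.1 this)
  have ha0 : a0 ≠ 0 := by
    intro h0
    have : (n:ℤ) ∈ K.map (AddMonoidHom.fst ℤ ℤ) := ⟨((n:ℤ), (0:ℤ)), hn0, rfl⟩
    rw [hmemA, h0] at this
    exact hn (by exact_mod_cast zero_dvd_iff.1 this)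
  set a : ℕ := a0.natAbs with ha_def
  set c : ℕ := c0.natAbs with hc_def
  have haa : a ≠ 0 := Int.natAbs_ne_zero.2 ha0
  have hcc : c ≠ 0 := Int.natAbs_ne_zero.2 hc0
  have hAa : ∀ x : ℤ, x ∈ K.map (AddMonoidHom.fst ℤ ℤ) ↔ (a : ℤ) ∣ x := by
    intro x; rw [hmemA, ha_def, Int.natAbs_dvd]
  have hCc : ∀ x : ℤ, ((0:ℤ), x) ∈ K ↔ (c : ℤ) ∣ x := by
    intro x; rw [hmemC, hc_def, Int.natAbs_dvd]
  obtain ⟨p, hpK, hp1⟩ := (hAa (a : ℤ)).2 dvd_rfl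
  set b : ℤ := p.2 % (c : ℤ) with hb_def
  have hcpos : (0:ℤ) < c := by exact_mod_cast Nat.pos_of_ne_zero hcc
  have hb0 : 0 ≤ b := Int.emod_nonneg _ (by exact_mod_cast hcc)
  have hblt : b < c := Int.emod_lt_of_pos _ hcpos
  have h0c : ((0:ℤ), (c:ℤ)) ∈ K := (hCc c).2 dvd_rfl
  have hab : (((a:ℤ)), b) ∈ K := by
    have hmem := K.sub_mem hpK (K.zsmul_mem h0c (p.2 / (c:ℤ)))
    have : p - (p.2 / (c:ℤ)) • ((0:ℤ), (c:ℤ)) = (((a:ℤ)), b) := by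
      rw [Prod.ext_iff]
      constructor
      · simpa using hp1
      · show p.2 - (p.2 / (c:ℤ)) * c = b
        rw [hb_def, Int.emod_def]
        ring
    rwa [this] at hmem
  have hKeq : K = L2 a b c := by
    apply le_antisymm
    · intro q hq
      obtain ⟨s, hs⟩ := (hAa q.1).1 ⟨q, hq, rfl⟩
      have h2 : ((0:ℤ), q.2 - s * b) ∈ K := by
        have hmem := K.sub_mem hq (K.zsmul_mem hab s)
        have : q - s • (((a:ℤ)), b) = ((0:ℤ), q.2 - s * b) := by
          rw [Prod.ext_iff]
          constructor
          · show q.1 - s * a = 0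
            rw [hs]; ring
          · show q.2 - s * b = q.2 - s * b
            rfl
        rwa [this] at hmem
      obtain ⟨t, ht⟩ := (hCc _).1 h2
      rw [mem_L2]
      refine ⟨s, t, ?_⟩
      rw [Prod.ext_iff]
      constructor
      · show q.1 = s * a
        rw [hs, mul_comm]
      · show q.2 = s * b + t * c
        rw [mul_comm t (c:ℤ)]
        linarith
    · rw [L2, closure_le]
      rintro x (rfl | rfl)
      · exact hab
      · exact h0c
  have hidx : n = c * a := by rw [← hK, hKeq]; exact index_L2 a haa b c hcc
  refine ⟨c, b.toNat, ⟨a, hidx⟩, by omega, ?_⟩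
  have hna : n / c = a := by rw [hidx, Nat.mul_div_cancel_left _ (Nat.pos_of_ne_zero hcc)]
  rw [hna, hKeq, Int.toNat_of_nonneg hb0]



lemma card_index_eq (n : ℕ) (hn : n ≠ 0) :
    Nat.card {K : AddSubgroup (ℤ × ℤ) // K.index = n} = ∑ k ∈ n.divisors, k := by
  have hF : ∀ (c : ℕ), c ∈ n.divisors → ∀ b : ℕ, (L2 (n / c) (b : ℤ) c).index = n := by
    intro c hcmem b
    obtain ⟨hcd, -⟩ := Nat.mem_divisors.1 hcmem
    have hc0 : c ≠ 0 := fun h0 => hn (by simpa [h0] using hcd)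
    have ha0 : n / c ≠ 0 := (Nat.div_ne_zero_iff_of_dvd hcd).2 ⟨hn, hc0⟩
    rw [index_L2 _ ha0 _ _ hc0, Nat.mul_div_cancel' hcd]
  let F : (Σ c : n.divisors, Fin c.1) → {K : AddSubgroup (ℤ × ℤ) // K.index = n} :=
    fun x => ⟨L2 (n / x.1.1) (x.2.1 : ℤ) x.1.1, hF x.1.1 x.1.2 x.2.1⟩
  have hbij : Function.Bijective F := by
    constructor
    · rintro ⟨⟨c, hc⟩, b⟩ ⟨⟨c', hc'⟩, b'⟩ h
      simp only [F, Subtype.mk.injEq] at h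
      obtain ⟨h1, h2⟩ := L2_inj hn (Nat.mem_divisors.1 hc).1 (Nat.mem_divisors.1 hc').1
        b.2 b'.2 h
      subst h1
      have : b = b' := Fin.ext h2
      subst this
      rfl
    · rintro ⟨K, hK⟩
      obtain ⟨c, b, hcd, hbc, hKeq⟩ := exists_rep hn K hK
      exact ⟨⟨⟨c, Nat.mem_divisors.2 ⟨hcd, hn⟩⟩, ⟨b, hbc⟩⟩, by simp [F, hKeq]⟩
  rw [← Nat.card_eq_of_bijective F hbij, Nat.card_eq_fintype_card, Fintype.card_sigma]
  simp only [Fintype.card_fin]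
  exact Finset.sum_coe_sort n.divisors id


def psi (m : ℕ) : ℤ × ℤ →+ ℤ × ℤ :=
  AddMonoidHom.mk' (fun p => (p.1, (m : ℤ) * p.2))
    (by intro p q; simp [Prod.ext_iff, Prod.fst_add, Prod.snd_add]; ring)

def R (m : ℕ) : AddSubgroup (ℤ × ℤ) :=
  (⊤ : AddSubgroup ℤ).prod (AddSubgroup.zmultiples (m : ℤ))

lemma mem_R {m : ℕ} {p : ℤ × ℤ} : p ∈ R m ↔ (m : ℤ) ∣ p.2 := by
  rw [R, AddSubgroup.mem_prod, mem_zmultiples_iff]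
  simp only [mem_top, true_and]
  constructor
  · rintro ⟨k, hk⟩; exact ⟨k, by rw [← hk, smul_eq_mul, mul_comm]⟩
  · rintro ⟨k, hk⟩; exact ⟨k, by rw [hk, smul_eq_mul, mul_comm]⟩

lemma psi_inj (m : ℕ) (hm : m ≠ 0) : Function.Injective (psi m) := by
  intro p q h
  have h' : ((p.1, (m:ℤ) * p.2) : ℤ × ℤ) = (q.1, (m:ℤ) * q.2) := h
  rw [Prod.ext_iff] at h'
  have hm' : (m : ℤ) ≠ 0 := Int.natCast_ne_zero.2 hm
  exact Prod.ext h'.1 (mul_left_cancel₀ hm' h'.2)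

lemma range_psi (m : ℕ) : (psi m).range = R m := by
  ext p
  rw [AddMonoidHom.mem_range, mem_R]
  constructor
  · rintro ⟨q, rfl⟩; exact ⟨q.2, rfl⟩
  · rintro ⟨k, hk⟩; exact ⟨(p.1, k), by simp [psi, Prod.ext_iff, hk]⟩

def gm (m : ℕ) : ℤ × ℤ →+ ZMod m :=
  AddMonoidHom.mk' (fun p => (p.2 : ZMod m)) (by intro p q; simp [Prod.snd_add])

lemma index_R (m : ℕ) (hm : m ≠ 0) : (R m).index = m := by
  haveI : NeZero m := ⟨hm⟩
  have hker : (gm m).ker = R m := by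
    ext p
    rw [AddMonoidHom.mem_ker, mem_R]
    show ((p.2 : ℤ) : ZMod m) = 0 ↔ _
    rw [ZMod.intCast_zmod_eq_zero_iff_dvd]
  rw [← hker]
  have h := AddSubgroup.index_ker (gm m)
  have hsurj : Function.Surjective (gm m) := fun x => by
    obtain ⟨y, rfl⟩ := ZMod.intCast_surjective x
    exact ⟨(0, y), rfl⟩
  rw [AddMonoidHom.range_eq_top_of_surjective _ hsurj] at h
  rw [h, Nat.card_congr AddSubgroup.topEquiv.toEquiv, Nat.card_zmod]

lemma index_map_psi (m : ℕ) (hm : m ≠ 0) (K : AddSubgroup (ℤ × ℤ)) :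
    (K.map (psi m)).index = K.index * m := by
  rw [AddSubgroup.index_map, (AddMonoidHom.ker_eq_bot_iff _).2 (psi_inj m hm), sup_bot_eq,
    range_psi, index_R m hm]

end Stmt4Aux

/-- The number of subgroups of `ℤ × ℤ` of index `d` contained in `ℤ × mℤ` equals `σ(d / m)`,
which is `0` if `m ∤ d`. -/
theorem stmt4 (m d : ℕ) (hm : 0 < m) (hd : 0 < d) :
    Nat.card {L : AddSubgroup (ℤ × ℤ) // L.index = d ∧
        L ≤ (⊤ : AddSubgroup ℤ).prod (AddSubgroup.zmultiples (m : ℤ))}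
      = if m ∣ d then ∑ k ∈ (d / m).divisors, k else 0 := by
  open Stmt4Aux in
  have hm0 : m ≠ 0 := hm.ne'
  by_cases hmd : m ∣ d
  · rw [if_pos hmd]
    set n := d / m with hn_def
    have hn : n ≠ 0 := (Nat.div_ne_zero_iff_of_dvd hmd).2 ⟨hd.ne', hm0⟩
    have hnm : n * m = d := Nat.div_mul_cancel hmd
    let G : {K : AddSubgroup (ℤ × ℤ) // K.index = n} →
        {L : AddSubgroup (ℤ × ℤ) // L.index = d ∧ L ≤ R m} := fun K =>
      ⟨K.1.map (psi m), by rw [index_map_psi m hm0, K.2, hnm], by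
        rw [← range_psi]; exact AddSubgroup.map_le_range _ _⟩
    have hbij : Function.Bijective G := by
      constructor
      · rintro ⟨K, hK⟩ ⟨K', hK'⟩ h
        simp only [G, Subtype.mk.injEq] at h
        exact Subtype.ext (AddSubgroup.map_injective (psi_inj m hm0) h)
      · rintro ⟨L, hL, hle⟩
        refine ⟨⟨L.comap (psi m), ?_⟩, ?_⟩
        · have hmap : (L.comap (psi m)).map (psi m) = L :=
            AddSubgroup.map_comap_eq_self (by rw [range_psi]; exact hle)
          have := index_map_psi m hm0 (L.comap (psi m))
          rw [hmap, hL] at this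
          exact (Nat.div_eq_of_eq_mul_left (Nat.pos_of_ne_zero hm0) this).symm
        · simp only [G, Subtype.mk.injEq]
          exact AddSubgroup.map_comap_eq_self (by rw [range_psi]; exact hle)
    calc Nat.card {L : AddSubgroup (ℤ × ℤ) // L.index = d ∧ L ≤ R m}
        = Nat.card {K : AddSubgroup (ℤ × ℤ) // K.index = n} :=
          (Nat.card_eq_of_bijective G hbij).symm
      _ = ∑ k ∈ n.divisors, k := card_index_eq n hn
  · rw [if_neg hmd]
    have : IsEmpty {L : AddSubgroup (ℤ × ℤ) // L.index = d ∧ L ≤ R m} := by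
      refine ⟨fun ⟨L, hL, hle⟩ => hmd ?_⟩
      have h1 := AddSubgroup.index_dvd_of_le hle
      rw [hL, index_R m hm0] at h1
      exact h1
    exact @Nat.card_of_isEmpty _ this
end

section
/- Let m and d be positive integers with m ≥ 2. The number of subgroups of ℤ × ℤ of index d that are NOT contained in ℤ × mℤ equals σ(d) − σ(d/m), where σ(d/m) = 0 if m ∤ d. -/
open AddSubgroup

/-- The endomorphism (s,t) ↦ (a s, b s + c t) of ℤ². -/
def lphi (a b c : ℤ) : (ℤ × ℤ) →+ (ℤ × ℤ) :=
  AddMonoidHom.mk' (fun p => (a * p.1, b * p.1 + c * p.2)) (by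
    intro p q; simp [Prod.ext_iff]; constructor <;> ring)

/-- The subgroup generated by (a,b) and (0,c). -/
def lgrp (a b c : ℤ) : AddSubgroup (ℤ × ℤ) := (lphi a b c).range

lemma mem_lgrp {a b c x y : ℤ} :
    (x, y) ∈ lgrp a b c ↔ ∃ s t : ℤ, a * s = x ∧ b * s + c * t = y := by
  constructor
  · rintro ⟨⟨s, t⟩, h⟩
    exact ⟨s, t, congrArg Prod.fst h, congrArg Prod.snd h⟩
  · rintro ⟨s, t, h1, h2⟩
    exact ⟨(s, t), Prod.ext h1 h2⟩

lemma lgrp_one (b c : ℤ) :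
    lgrp 1 b c = AddSubgroup.comap (AddMonoidHom.mk' (fun p : ℤ × ℤ => p.2 - b * p.1)
      (by intro p q; simp; ring)) (zmultiples c) := by
  ext ⟨x, y⟩
  simp only [mem_lgrp, AddSubgroup.mem_comap, AddMonoidHom.mk'_apply, mem_zmultiples_iff,
    smul_eq_mul]
  constructor
  · rintro ⟨s, t, h1, h2⟩
    exact ⟨t, by rw [← h2, ← h1]; ring⟩
  · rintro ⟨k, hk⟩
    exact ⟨x, k, by ring, by rw [mul_comm k c] at hk; omega⟩

lemma index_lgrp_one (b c : ℤ) : (lgrp 1 b c).index = c.natAbs := by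
  rw [lgrp_one]
  rw [AddSubgroup.index_comap_of_surjective _ (fun y => ⟨(0, y), by simp⟩)]
  exact Int.index_zmultiples c

lemma lgrp_eq_map (a b c : ℤ) : lgrp a b c = (lgrp 1 b c).map (lphi a 0 1) := by
  rw [lgrp, lgrp, ← AddMonoidHom.range_comp]
  congr 1
  ext ⟨s, t⟩ <;> simp [lphi] <;> ring

lemma prod_top_eq_comap (a : ℤ) :
    (zmultiples a).prod (⊤ : AddSubgroup ℤ) = AddSubgroup.comap (AddMonoidHom.fst ℤ ℤ) (zmultiples a) := by
  ext ⟨x, y⟩; simp [AddSubgroup.mem_prod]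

lemma index_prod_top (a : ℤ) : ((zmultiples a).prod (⊤ : AddSubgroup ℤ)).index = a.natAbs := by
  rw [prod_top_eq_comap, AddSubgroup.index_comap_of_surjective _ (fun y => ⟨(y, 0), rfl⟩)]
  exact Int.index_zmultiples a

lemma range_lphi_a (a : ℤ) : (lphi a 0 1).range = (zmultiples a).prod ⊤ := by
  ext ⟨x, y⟩
  simp only [AddMonoidHom.mem_range, Prod.ext_iff, lphi, AddMonoidHom.mk'_apply,
    AddSubgroup.mem_prod, mem_zmultiples_iff, smul_eq_mul, AddSubgroup.mem_top, and_true]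
  constructor
  · rintro ⟨⟨s, t⟩, h1, h2⟩; exact ⟨s, by rw [← h1]; ring⟩
  · rintro ⟨k, hk⟩; exact ⟨(k, y), by simp [hk.symm, mul_comm], by simp⟩

lemma index_lgrp (a b c : ℤ) (ha : a ≠ 0) : (lgrp a b c).index = a.natAbs * c.natAbs := by
  have hinj : Function.Injective (lphi a 0 1) := by
    intro ⟨s, t⟩ ⟨s', t'⟩ h
    simp only [lphi, AddMonoidHom.mk'_apply, Prod.ext_iff] at h ⊢
    constructor
    · exact mul_left_cancel₀ ha h.1
    · have := h.2; omega
  rw [lgrp_eq_map, AddSubgroup.index_map_of_injective _ hinj, index_lgrp_one,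
    range_lphi_a, index_prod_top]
  ring

-- invariants
lemma zmultiples_abs' (α : ℤ) : zmultiples |α| = zmultiples α := by
  ext x
  simp only [mem_zmultiples_iff, smul_eq_mul]
  rcases abs_choice α with h | h
  · rw [h]
  · rw [h]
    constructor
    · rintro ⟨k, rfl⟩; exact ⟨-k, by ring⟩
    · rintro ⟨k, rfl⟩; exact ⟨-k, by ring⟩

lemma exists_zmultiples_nonneg (H : AddSubgroup ℤ) : ∃ a : ℤ, 0 ≤ a ∧ H = zmultiples a := by
  obtain ⟨α, hα⟩ := Int.subgroup_cyclic H
  refine ⟨|α|, abs_nonneg α, ?_⟩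
  rw [hα, zmultiples_abs']
  exact (zmultiples_eq_closure α).symm ▸ rfl

lemma lgrp_fst {a b c x : ℤ} (h : ∃ y, (x, y) ∈ lgrp a b c) : a ∣ x := by
  obtain ⟨y, hy⟩ := h
  obtain ⟨s, t, h1, _⟩ := mem_lgrp.mp hy
  exact ⟨s, h1.symm⟩

lemma lgrp_slice {a b c y : ℤ} (ha : a ≠ 0) : (0, y) ∈ lgrp a b c ↔ c ∣ y := by
  rw [mem_lgrp]
  constructor
  · rintro ⟨s, t, h1, h2⟩
    have hs : s = 0 := by
      rcases mul_eq_zero.mp h1 with h | h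
      exacts [absurd h ha, h]
    exact ⟨t, by rw [← h2, hs]; ring⟩
  · rintro ⟨k, hk⟩
    exact ⟨0, k, by ring, by rw [hk]; ring⟩

lemma lgrp_at_a {a b c y : ℤ} (ha : a ≠ 0) : (a, y) ∈ lgrp a b c ↔ c ∣ y - b := by
  rw [mem_lgrp]
  constructor
  · rintro ⟨s, t, h1, h2⟩
    have hs : s = 1 := mul_left_cancel₀ ha (by rw [h1, mul_one] : a * s = a * 1)
    exact ⟨t, by rw [← h2, hs]; ring⟩
  · rintro ⟨k, hk⟩
    exact ⟨1, k, by ring, by omega⟩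

lemma lgrp_le_P {a b c : ℤ} (M : ℤ) (ha : a ≠ 0) :
    lgrp a b c ≤ (⊤ : AddSubgroup ℤ).prod (zmultiples M) ↔ M ∣ b ∧ M ∣ c := by
  constructor
  · intro h
    have h1 := h (mem_lgrp.mpr ⟨1, 0, by ring, by ring⟩ : (a, b) ∈ lgrp a b c)
    have h2 := h (mem_lgrp.mpr ⟨0, 1, by ring, by ring⟩ : ((0:ℤ), c) ∈ lgrp a b c)
    rw [AddSubgroup.mem_prod, mem_zmultiples_iff] at h1 h2
    obtain ⟨k, hk⟩ := h1.2
    obtain ⟨l, hl⟩ := h2.2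
    have hk' : k * M = b := hk
    have hl' : l * M = c := hl
    exact ⟨⟨k, by rw [← hk']; ring⟩, ⟨l, by rw [← hl']; ring⟩⟩
  · rintro ⟨⟨k, hk⟩, ⟨l, hl⟩⟩ ⟨x, y⟩ hxy
    obtain ⟨s, t, h1, h2⟩ := mem_lgrp.mp hxy
    rw [AddSubgroup.mem_prod, mem_zmultiples_iff]
    refine ⟨trivial, ⟨k * s + l * t, ?_⟩⟩
    show (k * s + l * t) * M = y
    rw [← h2, hk, hl]; ring

-- existence
lemma exists_lgrp (L : AddSubgroup (ℤ × ℤ)) {d : ℕ} (hL : L.index = d) (hd : 0 < d) :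
    ∃ a b c : ℤ, 0 < a ∧ 0 < c ∧ 0 ≤ b ∧ b < c ∧ L = lgrp a b c := by
  have hd10 : ((d:ℤ), (0:ℤ)) ∈ L := by
    have := AddSubgroup.nsmul_index_mem L ((1:ℤ), (0:ℤ))
    rw [hL] at this
    simpa using this
  have h0d : ((0:ℤ), (d:ℤ)) ∈ L := by
    have := AddSubgroup.nsmul_index_mem L ((0:ℤ), (1:ℤ))
    rw [hL] at this
    simpa using this
  obtain ⟨a, ha_nn, hα⟩ := exists_zmultiples_nonneg (L.map (AddMonoidHom.fst ℤ ℤ))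
  obtain ⟨c, hc_nn, hγ⟩ := exists_zmultiples_nonneg (L.comap (AddMonoidHom.inr ℤ ℤ))
  have hmapa : ∀ x y : ℤ, (x, y) ∈ L → a ∣ x := by
    intro x y h
    have hx : x ∈ zmultiples a := by rw [← hα]; exact ⟨(x, y), h, rfl⟩
    obtain ⟨k, hk⟩ := hx
    have hk' : k * a = x := hk
    exact ⟨k, by rw [← hk']; ring⟩
  have hslice : ∀ y : ℤ, ((0:ℤ), y) ∈ L ↔ c ∣ y := by
    intro y
    constructor
    · intro h
      have hy : y ∈ zmultiples c := by rw [← hγ]; exact h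
      obtain ⟨k, hk⟩ := hy
      have hk' : k * c = y := hk
      exact ⟨k, by rw [← hk']; ring⟩
    · rintro ⟨k, hk⟩
      have hc : c ∈ zmultiples c := mem_zmultiples c
      rw [← hγ] at hc
      have h2 := zsmul_mem hc k
      have h3 : (AddMonoidHom.inr ℤ ℤ) (k • c) ∈ L := h2
      rw [map_zsmul] at h3
      have h4 : (k • ((0:ℤ), c) : ℤ × ℤ) = ((0:ℤ), y) := by
        simp only [Prod.smul_mk, smul_eq_mul, Prod.mk.injEq]
        exact ⟨mul_zero k, by rw [hk]; ring⟩
      rwa [show ((AddMonoidHom.inr ℤ ℤ) c) = ((0:ℤ), c) from rfl, h4] at h3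
  have ha0 : 0 < a := by
    rcases eq_or_lt_of_le ha_nn with h | h
    · exfalso
      have hdvd : a ∣ (d:ℤ) := hmapa d 0 hd10
      rw [← h] at hdvd
      simp at hdvd
      omega
    · exact h
  have hc0 : 0 < c := by
    rcases eq_or_lt_of_le hc_nn with h | h
    · exfalso
      have hdvd : c ∣ (d:ℤ) := (hslice d).mp h0d
      rw [← h] at hdvd
      simp at hdvd
      omega
    · exact h
  have haA : a ∈ zmultiples a := mem_zmultiples a
  rw [← hα] at haA
  obtain ⟨⟨x₀, y₀⟩, hx₀, hfst⟩ := haA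
  have hx : x₀ = a := hfst
  rw [hx] at hx₀
  have hbdvd : c ∣ y₀ - y₀ % c := by
    refine ⟨y₀ / c, ?_⟩
    have := Int.mul_ediv_add_emod y₀ c
    linarith
  have hbc : ((0:ℤ), y₀ - y₀ % c) ∈ L := (hslice _).mpr hbdvd
  have hab : (a, y₀ % c) ∈ L := by
    have hsub := AddSubgroup.sub_mem L hx₀ hbc
    have heq : ((a, y₀) - ((0:ℤ), y₀ - y₀ % c) : ℤ × ℤ) = (a, y₀ % c) := by
      simp only [Prod.mk_sub_mk, Prod.mk.injEq]
      exact ⟨sub_zero a, by ring⟩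
    rwa [heq] at hsub
  refine ⟨a, y₀ % c, c, ha0, hc0, Int.emod_nonneg _ (by omega), Int.emod_lt_of_pos _ hc0, ?_⟩
  ext ⟨x, y⟩
  rw [mem_lgrp]
  constructor
  · intro hxy
    obtain ⟨s, hs⟩ := hmapa x y hxy
    have hsm : (s • ((a, y₀ % c) : ℤ × ℤ)) ∈ L := zsmul_mem hab s
    have hsub := AddSubgroup.sub_mem L hxy hsm
    have heq : ((x, y) - s • ((a, y₀ % c) : ℤ × ℤ)) = ((0:ℤ), y - s * (y₀ % c)) := by
      simp only [Prod.smul_mk, smul_eq_mul, Prod.mk_sub_mk, Prod.mk.injEq]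
      exact ⟨by rw [hs]; ring, trivial⟩
    rw [heq] at hsub
    obtain ⟨t, ht⟩ := (hslice _).mp hsub
    exact ⟨s, t, hs.symm, by rw [mul_comm (y₀ % c) s]; linarith [ht]⟩
  · rintro ⟨s, t, h1, h2⟩
    have hsm : (s • ((a, y₀ % c) : ℤ × ℤ)) ∈ L := zsmul_mem hab s
    have hcm : ((0:ℤ), c * t) ∈ L := (hslice _).mpr ⟨t, rfl⟩
    have hadd := AddSubgroup.add_mem L hsm hcm
    have heq : (s • ((a, y₀ % c) : ℤ × ℤ) + ((0:ℤ), c * t)) = (x, y) := by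
      simp only [Prod.smul_mk, smul_eq_mul, Prod.mk_add_mk, Prod.mk.injEq]
      exact ⟨by rw [← h1]; ring, by rw [← h2]; ring⟩
    rwa [heq] at hadd

lemma lgrp_inj {a b c a' b' c' : ℤ} (ha : 0 < a) (hc : 0 < c) (ha' : 0 < a') (hc' : 0 < c')
    (hb : 0 ≤ b) (hbc : b < c) (hb' : 0 ≤ b') (hbc' : b' < c')
    (h : lgrp a b c = lgrp a' b' c') : a = a' ∧ b = b' ∧ c = c' := by
  have haa : a = a' := by
    have h1 : a' ∣ a := lgrp_fst (a := a') (b := b') (c := c')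
      ⟨b, h ▸ mem_lgrp.mpr ⟨1, 0, by ring, by ring⟩⟩
    have h2 : a ∣ a' := lgrp_fst (a := a) (b := b) (c := c)
      ⟨b', h.symm ▸ mem_lgrp.mpr ⟨1, 0, by ring, by ring⟩⟩
    exact Int.dvd_antisymm (by omega) (by omega) h2 h1
  have hcc : c = c' := by
    have h1 : c' ∣ c := (lgrp_slice (by omega)).mp
      (h ▸ mem_lgrp.mpr ⟨0, 1, by ring, by ring⟩)
    have h2 : c ∣ c' := (lgrp_slice (by omega)).mp
      (h.symm ▸ mem_lgrp.mpr ⟨0, 1, by ring, by ring⟩)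
    exact Int.dvd_antisymm (by omega) (by omega) h2 h1
  refine ⟨haa, ?_, hcc⟩
  have hmem : (a, b) ∈ lgrp a' b' c' := h ▸ mem_lgrp.mpr ⟨1, 0, by ring, by ring⟩
  rw [← haa] at hmem
  have hdvd : c' ∣ b - b' := (lgrp_at_a (by omega)).mp hmem
  obtain ⟨k, hk⟩ := hdvd
  have : k = 0 := by
    rcases lt_trichotomy k 0 with hk0 | hk0 | hk0
    · nlinarith
    · exact hk0
    · nlinarith
  subst this
  simp at hk
  omega

lemma pos_of_mul_eq {a c d : ℕ} (h : a * c = d) (hd : 0 < d) : 0 < a ∧ 0 < c := by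
  rcases Nat.eq_zero_or_pos a with h0 | h0
  · rw [h0, zero_mul] at h; omega
  rcases Nat.eq_zero_or_pos c with h1 | h1
  · rw [h1, mul_zero] at h; omega
  exact ⟨h0, h1⟩

lemma card_eq_T (m d : ℕ) (hd : 0 < d) :
    Nat.card {L : AddSubgroup (ℤ × ℤ) // L.index = d ∧
        ¬ L ≤ (⊤ : AddSubgroup ℤ).prod (zmultiples (m : ℤ))}
      = Nat.card {x : (ℕ × ℕ) × ℕ //
          (x.1.1 * x.1.2 = d ∧ x.2 < x.1.2) ∧ ¬ (m ∣ x.1.2 ∧ m ∣ x.2)} := by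
  symm
  apply Nat.card_congr
  have key : ∀ x : {x : (ℕ × ℕ) × ℕ //
      (x.1.1 * x.1.2 = d ∧ x.2 < x.1.2) ∧ ¬ (m ∣ x.1.2 ∧ m ∣ x.2)},
      (lgrp (x.1.1.1 : ℤ) (x.1.2 : ℤ) (x.1.1.2 : ℤ)).index = d ∧
      ¬ lgrp (x.1.1.1 : ℤ) (x.1.2 : ℤ) (x.1.1.2 : ℤ) ≤
        (⊤ : AddSubgroup ℤ).prod (zmultiples (m : ℤ)) := by
    rintro ⟨⟨⟨a, c⟩, b⟩, ⟨hac, hbc⟩, hnd⟩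
    obtain ⟨ha, hc⟩ := pos_of_mul_eq hac hd
    have ha' : (a : ℤ) ≠ 0 := by exact_mod_cast ha.ne'
    constructor
    · rw [index_lgrp _ _ _ ha', Int.natAbs_natCast, Int.natAbs_natCast]
      exact hac
    · intro hle
      rw [lgrp_le_P _ ha'] at hle
      exact hnd ⟨by exact_mod_cast hle.2, by exact_mod_cast hle.1⟩
  refine Equiv.ofBijective
    (fun x => ⟨lgrp (x.1.1.1 : ℤ) (x.1.2 : ℤ) (x.1.1.2 : ℤ), key x⟩) ⟨?_, ?_⟩
  · rintro ⟨⟨⟨a, c⟩, b⟩, ⟨hac, hbc⟩, hnd⟩ ⟨⟨⟨a', c'⟩, b'⟩, ⟨hac', hbc'⟩, hnd'⟩ hEq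
    simp only [Subtype.mk.injEq] at hEq ⊢
    obtain ⟨ha, hc⟩ := pos_of_mul_eq hac hd
    obtain ⟨ha', hc'⟩ := pos_of_mul_eq hac' hd
    obtain ⟨e1, e2, e3⟩ := lgrp_inj (by exact_mod_cast ha) (by exact_mod_cast hc)
      (by exact_mod_cast ha') (by exact_mod_cast hc')
      (by positivity) (by exact_mod_cast hbc) (by positivity) (by exact_mod_cast hbc') hEq
    have : a = a' := by exact_mod_cast e1
    have : b = b' := by exact_mod_cast e2
    have : c = c' := by exact_mod_cast e3
    simp_all
  · rintro ⟨L, hL, hnle⟩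
    obtain ⟨a, b, c, ha, hc, hb0, hbc, rfl⟩ := exists_lgrp L hL hd
    have hca : (a.natAbs : ℤ) = a := Int.natAbs_of_nonneg (by omega)
    have hcb : (b.natAbs : ℤ) = b := Int.natAbs_of_nonneg hb0
    have hcc : (c.natAbs : ℤ) = c := Int.natAbs_of_nonneg (by omega)
    refine ⟨⟨⟨⟨a.natAbs, c.natAbs⟩, b.natAbs⟩, ⟨⟨?_, ?_⟩, ?_⟩⟩, ?_⟩
    · rw [← hL, index_lgrp _ _ _ (by omega)]
    · show b.natAbs < c.natAbs
      omega
    · rintro ⟨h1, h2⟩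
      apply hnle
      rw [lgrp_le_P _ (by omega : a ≠ 0)]
      constructor
      · rw [← hcb]; exact_mod_cast h2
      · rw [← hcc]; exact_mod_cast h1
    · simp only [Subtype.mk.injEq]
      rw [hca, hcb, hcc]

open Finset in
lemma count_mult (m c : ℕ) (hm : 0 < m) (h : m ∣ c) :
    ((range c).filter (m ∣ ·)).card = c / m := by
  obtain ⟨c', rfl⟩ := h
  rw [Nat.mul_div_cancel_left _ hm]
  have himg : (range (m * c')).filter (m ∣ ·) = (range c').image (m * ·) := by
    ext b
    simp only [mem_filter, mem_range, mem_image]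
    constructor
    · rintro ⟨hb, k, rfl⟩
      exact ⟨k, by exact lt_of_mul_lt_mul_left hb (Nat.zero_le m), rfl⟩
    · rintro ⟨k, hk, rfl⟩
      exact ⟨Nat.mul_lt_mul_left hm |>.mpr hk, ⟨k, rfl⟩⟩
  rw [himg, Finset.card_image_of_injective _ (fun x y hxy => by
    exact Nat.eq_of_mul_eq_mul_left hm hxy)]
  exact card_range c'

open Finset in
lemma card_T (m d : ℕ) (hm : 2 ≤ m) (hd : 0 < d) :
    Nat.card {x : (ℕ × ℕ) × ℕ //
        (x.1.1 * x.1.2 = d ∧ x.2 < x.1.2) ∧ ¬ (m ∣ x.1.2 ∧ m ∣ x.2)}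
      = (∑ k ∈ d.divisors, k) - (if m ∣ d then ∑ k ∈ (d / m).divisors, k else 0) := by
  classical
  -- transfer to a Finset
  have e1 : Nat.card {x : (ℕ × ℕ) × ℕ //
        (x.1.1 * x.1.2 = d ∧ x.2 < x.1.2) ∧ ¬ (m ∣ x.1.2 ∧ m ∣ x.2)}
      = ((d.divisorsAntidiagonal ×ˢ range d).filter
          (fun x => x.2 < x.1.2 ∧ ¬ (m ∣ x.1.2 ∧ m ∣ x.2))).card := by
    rw [← Nat.card_eq_finsetCard]
    apply Nat.card_congr
    apply Equiv.subtypeEquivRight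
    intro x
    simp only [mem_filter, mem_product, Nat.mem_divisorsAntidiagonal, mem_range]
    constructor
    · rintro ⟨⟨hac, hbc⟩, hnd⟩
      have hdvd : x.1.2 ∣ d := ⟨x.1.1, by rw [← hac]; ring⟩
      have : x.1.2 ≤ d := Nat.le_of_dvd hd hdvd
      exact ⟨⟨⟨hac, by omega⟩, by omega⟩, hbc, hnd⟩
    · rintro ⟨⟨⟨hac, _⟩, _⟩, hbc, hnd⟩
      exact ⟨⟨hac, hbc⟩, hnd⟩
  rw [e1]
  -- split into fiberwise sums
  have prod_filter_card : ∀ (P : ℕ × ℕ → ℕ → Prop) [DecidablePred fun x : (ℕ × ℕ) × ℕ => P x.1 x.2]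
      [∀ p, DecidablePred (P p)],
      ((d.divisorsAntidiagonal ×ˢ range d).filter (fun x => P x.1 x.2)).card
        = ∑ p ∈ d.divisorsAntidiagonal, ((range d).filter (P p)).card := by
    intro P _ _
    rw [card_filter, sum_product]
    exact sum_congr rfl (fun p _ => (card_filter _ _).symm)
  rw [prod_filter_card (fun p b => b < p.2 ∧ ¬ (m ∣ p.2 ∧ m ∣ b))]
  have hc_le : ∀ p ∈ d.divisorsAntidiagonal, p.2 ≤ d := by
    intro p hp
    rw [Nat.mem_divisorsAntidiagonal] at hp
    exact Nat.le_of_dvd hd ⟨p.1, by rw [← hp.1]; ring⟩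
  have inner_eq : ∀ p ∈ d.divisorsAntidiagonal,
      ((range d).filter (fun b => b < p.2 ∧ ¬ (m ∣ p.2 ∧ m ∣ b))).card
        = p.2 - (if m ∣ p.2 then p.2 / m else 0) := by
    intro p hp
    have hle := hc_le p hp
    have hrange : (range d).filter (fun b => b < p.2 ∧ ¬ (m ∣ p.2 ∧ m ∣ b))
        = (range p.2).filter (fun b => ¬ (m ∣ p.2 ∧ m ∣ b)) := by
      ext b
      simp only [mem_filter, mem_range]
      constructor
      · rintro ⟨_, hbc, hq⟩; exact ⟨hbc, hq⟩
      · rintro ⟨hbc, hq⟩; exact ⟨by omega, hbc, hq⟩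
    rw [hrange]
    by_cases hmc : m ∣ p.2
    · have hcongr : (range p.2).filter (fun b => ¬ (m ∣ p.2 ∧ m ∣ b))
          = (range p.2).filter (fun b => ¬ m ∣ b) := by
        apply filter_congr
        intro b _
        simp [hmc]
      rw [hcongr, if_pos hmc]
      have hsplit := card_filter_add_card_filter_not
        (s := range p.2) (p := fun b => m ∣ b)
      rw [count_mult m p.2 (by omega) hmc, card_range] at hsplit
      omega
    · rw [if_neg hmc, Nat.sub_zero, filter_true_of_mem, card_range]
      intro b _
      exact fun h => hmc h.1
  rw [sum_congr rfl inner_eq]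
  have hsub_le : ∀ p ∈ d.divisorsAntidiagonal, (if m ∣ p.2 then p.2 / m else 0) ≤ p.2 := by
    intro p _
    split
    · exact Nat.div_le_self _ _
    · omega
  rw [Finset.sum_tsub_distrib (f := fun p : ℕ × ℕ => p.2)
    (g := fun p : ℕ × ℕ => if m ∣ p.2 then p.2 / m else 0) _ hsub_le]
  congr 1
  · exact Nat.sum_divisorsAntidiagonal' (f := fun a c => c)
  · by_cases hmd : m ∣ d
    · rw [if_pos hmd, ← sum_filter]
      have := Finset.sum_nbij' (s := d.divisorsAntidiagonal.filter (fun p => m ∣ p.2))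
        (t := (d / m).divisorsAntidiagonal)
        (f := fun p => p.2 / m) (g := fun q => q.2)
        (i := fun p => (p.1, p.2 / m)) (j := fun q => (q.1, q.2 * m))
        ?_ ?_ ?_ ?_ ?_
      · rw [this]
        exact Nat.sum_divisorsAntidiagonal' (f := fun a c => c)
      · rintro ⟨a, c⟩ hp
        simp only [mem_filter, Nat.mem_divisorsAntidiagonal] at hp ⊢
        obtain ⟨⟨hac, _⟩, hmc⟩ := hp
        refine ⟨by rw [← Nat.mul_div_assoc a hmc, hac], ?_⟩
        have h1 : m ≤ d := Nat.le_of_dvd hd hmd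
        have h2 : 0 < d / m := Nat.div_pos h1 (by omega)
        omega
      · rintro ⟨a, c'⟩ hq
        simp only [mem_filter, Nat.mem_divisorsAntidiagonal] at hq ⊢
        obtain ⟨hac, _⟩ := hq
        refine ⟨⟨?_, by omega⟩, ⟨c', by ring⟩⟩
        rw [← mul_assoc, hac, Nat.div_mul_cancel hmd]
      · rintro ⟨a, c⟩ hp
        simp only [mem_filter, Nat.mem_divisorsAntidiagonal] at hp
        have := Nat.div_mul_cancel hp.2
        simp [this]
      · rintro ⟨a, c'⟩ _
        have : c' * m / m = c' := Nat.mul_div_cancel _ (by omega)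
        simp [this]
      · rintro ⟨a, c⟩ _
        rfl
    · rw [if_neg hmd]
      apply sum_eq_zero
      intro p hp
      rw [Nat.mem_divisorsAntidiagonal] at hp
      have : ¬ m ∣ p.2 := by
        intro hmc
        exact hmd (dvd_trans hmc ⟨p.1, by rw [← hp.1]; ring⟩)
      rw [if_neg this]


/-- The number of subgroups of `ℤ × ℤ` of index `d` NOT contained in `ℤ × mℤ` equals
`σ(d) − σ(d/m)`, with `σ(d/m) = 0` if `m ∤ d`. -/
theorem stmt5 (m d : ℕ) (hm : 2 ≤ m) (hd : 0 < d) :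
    Nat.card {L : AddSubgroup (ℤ × ℤ) // L.index = d ∧
        ¬ L ≤ (⊤ : AddSubgroup ℤ).prod (AddSubgroup.zmultiples (m : ℤ))}
      = (∑ k ∈ d.divisors, k) - (if m ∣ d then ∑ k ∈ (d / m).divisors, k else 0) := by
  rw [card_eq_T m d hd, card_T m d hm hd]
end
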